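/- Let F be a finite field and C ⊆ F^n a k-dimensional linear code with two ordered bases A and B. Then for every integer t with 0 ≤ t ≤ k, the number of matrices of rank t in the matrix code of relations C_mat(A) equals the number of matrices of rank t in C_mat(B). -/

import Mathlib

open Matrix

/-- Componentwise (Schur) product of two vectors. -/
def schur {F : Type*} [Field F] {n : ℕ} (a b : Fin n → F) : Fin n → F :=
  fun t => a t * b t

/-- The matrix code of quadratic relations associated with the ordered family `v`. -/
def Cmat {F : Type*} [Field F] {n : ℕ} {ι : Type*} [Fintype ι] [LinearOrder ι]
    (v : ι → Fin n → F) : Set (Matrix ι ι F) :=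
  { M | ∃ c : ι → ι → F,
      (∑ i : ι, ∑ j : ι, (if i ≤ j then c i j • schur (v i) (v j) else 0)) = 0 ∧
      (∀ i j : ι, i < j → M i j = c i j ∧ M j i = c i j) ∧
      (∀ i : ι, M i i = 2 * c i i) }

private lemma sum_uppertri {α : Type*} [AddCommMonoid α] {k : ℕ} (f : Fin k → Fin k → α) :
    ∑ i, ∑ j, (if i ≤ j then (if i < j then f i j + f j i else f i j) else 0)
      = ∑ i, ∑ j, f i j := by
  have h : ∀ i j : Fin k, (if i ≤ j then (if i < j then f i j + f j i else f i j) else 0)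
      = (if i ≤ j then f i j else 0) + (if i < j then f j i else 0) := by
    intro i j
    rcases lt_trichotomy i j with h | h | h
    · simp [h, h.le]
    · subst h; simp
    · simp [not_le.mpr h, h.not_gt, not_lt.mpr h.le]
  simp_rw [h, Finset.sum_add_distrib]
  have h2 : ∑ i : Fin k, ∑ j, (if i < j then f j i else 0)
      = ∑ i : Fin k, ∑ j, (if j < i then f i j else 0) := Finset.sum_comm
  rw [h2, ← Finset.sum_add_distrib]
  simp_rw [← Finset.sum_add_distrib]
  refine Finset.sum_congr rfl fun i _ => Finset.sum_congr rfl fun j _ => ?_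
  rcases le_or_gt i j with h | h
  · simp [h, not_lt.mpr h]
  · simp [not_le.mpr h, h]

private lemma expand_lemma {F : Type*} [Field F] {n k : ℕ} (a b : Fin k → Fin n → F)
    (P W : Matrix (Fin k) (Fin k) F)
    (hP : ∀ i, ∑ j, P i j • a j = b i) :
    ∑ i, ∑ j, (Pᵀ * W * P) i j • schur (a i) (a j)
      = ∑ i, ∑ j, W i j • schur (b i) (b j) := by
  have hb : ∀ i t, b i t = ∑ l, P i l * a l t := by
    intro i t
    rw [← hP i]
    simp [Finset.sum_apply]
  funext t
  simp only [Finset.sum_apply, Pi.smul_apply, smul_eq_mul, schur, hb,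
    Matrix.mul_apply, Matrix.transpose_apply, Finset.sum_mul, Finset.mul_sum]
  conv_lhs => enter [2, k', 2, l]; rw [Finset.sum_comm]
  conv_lhs => enter [2, k']; rw [Finset.sum_comm]
  rw [Finset.sum_comm]
  conv_lhs => enter [2, i, 2, k']; rw [Finset.sum_comm]
  conv_lhs => enter [2, i]; rw [Finset.sum_comm]
  conv_rhs => enter [2, i, 2, j]; rw [Finset.sum_comm]
  refine Finset.sum_congr rfl fun i _ => Finset.sum_congr rfl fun j _ =>
    Finset.sum_congr rfl fun k' _ => Finset.sum_congr rfl fun l _ => by ring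

/-- Change of basis maps the matrix code of relations to the matrix code of relations. -/
private lemma cmat_map {F : Type*} [Field F] {n k : ℕ}
    (a b : Fin k → Fin n → F) (P : Matrix (Fin k) (Fin k) F)
    (hP : ∀ i, ∑ j, P i j • a j = b i)
    {M : Matrix (Fin k) (Fin k) F} (hM : M ∈ Cmat b) :
    Pᵀ * M * P ∈ Cmat a := by
  obtain ⟨c, hc, hoff, hdiag⟩ := hM
  set C' : Matrix (Fin k) (Fin k) F := Matrix.of fun i j => if i ≤ j then c i j else 0 with hC'
  have hMC : M = C' + C'ᵀ := by
    ext i j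
    rcases lt_trichotomy i j with h | h | h
    · simp [C', Matrix.transpose_apply, h.le, not_le.mpr h, (hoff i j h).1]
    · subst h; simp [C', hdiag i, two_mul]
    · simp [C', Matrix.transpose_apply, h.le, not_le.mpr h, (hoff j i h).2]
  set V := Pᵀ * C' * P with hV
  have hN : Pᵀ * M * P = V + Vᵀ := by
    rw [hMC]
    simp only [Matrix.mul_add, Matrix.add_mul, hV, Matrix.transpose_mul,
      Matrix.transpose_transpose, Matrix.mul_assoc]
  refine ⟨fun i j => if i < j then V i j + V j i else V i j, ?_, ?_, ?_⟩
  · have h1 : ∑ i, ∑ j, (if i ≤ j then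
        (if i < j then V i j + V j i else V i j) • schur (a i) (a j) else 0)
        = ∑ i, ∑ j, V i j • schur (a i) (a j) := by
      have := sum_uppertri (fun i j => V i j • schur (a i) (a j))
      rw [← this]
      refine Finset.sum_congr rfl fun i _ => Finset.sum_congr rfl fun j _ => ?_
      rcases lt_trichotomy i j with h | h | h
      · simp only [h, h.le, if_true, add_smul]
        congr 1
        have : schur (a j) (a i) = schur (a i) (a j) := by
          funext t; simp [schur, mul_comm]
        rw [this]
      · subst h; simp
      · simp [not_le.mpr h, h.not_gt]
    rw [h1, hV, expand_lemma a b P C' hP]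
    rw [← hc]
    refine Finset.sum_congr rfl fun i _ => Finset.sum_congr rfl fun j _ => ?_
    rcases le_or_gt i j with h | h
    · simp [C', h]
    · simp [C', not_le.mpr h]
  · intro i j hij
    constructor
    · rw [hN]; simp [hij]
    · rw [hN]; simp [hij, add_comm]
  · intro i
    rw [hN]; simp [two_mul]

theorem cmat_rank_distribution_invariant {F : Type*} [Field F] [Fintype F] {n k : ℕ}
    (a b : Fin k → Fin n → F)
    (ha : LinearIndependent F a) (hb : LinearIndependent F b)
    (hspan : Submodule.span F (Set.range a) = Submodule.span F (Set.range b)) :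
    ∀ t : ℕ, t ≤ k →
      Nat.card {M : Matrix (Fin k) (Fin k) F // M ∈ Cmat a ∧ M.rank = t} =
        Nat.card {M : Matrix (Fin k) (Fin k) F // M ∈ Cmat b ∧ M.rank = t} := by
  intro t _
  -- obtain change of basis matrices
  have hbmem : ∀ i, b i ∈ Submodule.span F (Set.range a) := fun i => by
    rw [hspan]; exact Submodule.subset_span ⟨i, rfl⟩
  have hamem : ∀ i, a i ∈ Submodule.span F (Set.range b) := fun i => by
    rw [← hspan]; exact Submodule.subset_span ⟨i, rfl⟩
  choose Pf hPf using fun i => (Submodule.mem_span_range_iff_exists_fun F).mp (hbmem i)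
  choose Qf hQf using fun i => (Submodule.mem_span_range_iff_exists_fun F).mp (hamem i)
  set P : Matrix (Fin k) (Fin k) F := Matrix.of Pf with hPdef
  set Q : Matrix (Fin k) (Fin k) F := Matrix.of Qf with hQdef
  have hP : ∀ i, ∑ j, P i j • a j = b i := hPf
  have hQ : ∀ i, ∑ j, Q i j • b j = a i := hQf
  -- Q * P = 1
  have hQP : Q * P = 1 := by
    ext i l
    have key : ∑ l, ((Q * P) i l - (1 : Matrix (Fin k) (Fin k) F) i l) • a l = 0 := by
      have e1 : ∑ l, (Q * P) i l • a l = a i := by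
        rw [← hQ i]
        simp_rw [Matrix.mul_apply, Finset.sum_smul, ← hP, Finset.smul_sum, smul_smul]
        exact Finset.sum_comm
      have e2 : ∑ l, (1 : Matrix (Fin k) (Fin k) F) i l • a l = a i := by
        simp [Matrix.one_apply, ite_smul]
      simp_rw [sub_smul, Finset.sum_sub_distrib, e1, e2, sub_self]
    exact sub_eq_zero.mp (Fintype.linearIndependent_iff.mp ha _ key l)
  have hPQ : P * Q = 1 := mul_eq_one_comm.mp hQP
  have hPdet : IsUnit P.det :=
    IsUnit.of_mul_eq_one Q.det (by rw [← Matrix.det_mul, hPQ, Matrix.det_one])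
  have hQdet : IsUnit Q.det :=
    IsUnit.of_mul_eq_one P.det (by rw [← Matrix.det_mul, hQP, Matrix.det_one])
  have hrank : ∀ (R : Matrix (Fin k) (Fin k) F), IsUnit R.det →
      ∀ M : Matrix (Fin k) (Fin k) F, (Rᵀ * M * R).rank = M.rank := by
    intro R hR M
    rw [Matrix.rank_mul_eq_left_of_isUnit_det R (Rᵀ * M) hR,
      Matrix.rank_mul_eq_right_of_isUnit_det Rᵀ M (by rwa [Matrix.det_transpose])]
  -- the bijection
  refine Nat.card_congr ⟨
    fun x => ⟨Qᵀ * x.1 * Q, cmat_map b a Q hQ x.2.1, by rw [hrank Q hQdet]; exact x.2.2⟩,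
    fun x => ⟨Pᵀ * x.1 * P, cmat_map a b P hP x.2.1, by rw [hrank P hPdet]; exact x.2.2⟩,
    ?_, ?_⟩
  · rintro ⟨M, hM⟩
    ext : 1
    show Pᵀ * (Qᵀ * M * Q) * P = M
    calc Pᵀ * (Qᵀ * M * Q) * P = (Q * P)ᵀ * M * (Q * P) := by
          rw [Matrix.transpose_mul]; noncomm_ring
      _ = M := by rw [hQP]; simp
  · rintro ⟨M, hM⟩
    ext : 1
    show Qᵀ * (Pᵀ * M * P) * Q = M
    calc Qᵀ * (Pᵀ * M * P) * Q = (P * Q)ᵀ * M * (P * Q) := by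
          rw [Matrix.transpose_mul]; noncomm_ring
      _ = M := by rw [hPQ]; simp
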